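/- Let p be a prime with τ(p) ≠ 0, and write 2τ(p²)/τ(p)² = E/D and τ(p³)/τ(p)³ = F/D where D > 0 is the least common positive denominator. Then gcd(E,F) = gcd(D,E) = gcd(D,F) = 1, E − F = D, D ≤ C·p¹¹, max(|E|,|F|) ≤ C·p²², and max(|E|,|F|) ≥ c·p, for absolute constants C, c > 0. -/

import Mathlib

private lemma den_add_intCast (q : ℚ) (z : ℤ) : (q + (z : ℚ)).den = q.den := by
  apply Nat.dvd_antisymm
  · have h := Rat.add_den_dvd q (z : ℚ)
    simpa using h
  · have h := Rat.add_den_dvd (q + (z : ℚ)) ((-z : ℤ) : ℚ)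
    simpa using h

/-- Writing `2τ(p²)/τ(p)² = E/D` and `τ(p³)/τ(p)³ = F/D` over the least common positive
denominator `D`, one has `gcd(E,F) = gcd(D,E) = gcd(D,F) = 1`, `E − F = D`,
`D ≤ C·p¹¹`, `max(|E|,|F|) ≤ C·p²²` and `max(|E|,|F|) ≥ c·p`. -/
theorem tau_unit_equation_numerators :
    ∃ C c : ℝ, 0 < C ∧ 0 < c ∧
      ∀ τ : ℕ → ℤ,
        (∀ p : ℕ, p.Prime → τ (p ^ 2) = (τ p) ^ 2 - (p : ℤ) ^ 11) →
        (∀ p : ℕ, p.Prime → τ (p ^ 3) = τ p * ((τ p) ^ 2 - 2 * (p : ℤ) ^ 11)) →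
        (∀ p : ℕ, p.Prime → (τ p) ^ 2 ≤ 4 * (p : ℤ) ^ 11) →
        ∀ p : ℕ, p.Prime → τ p ≠ 0 →
          ∀ u v : ℚ, u = 2 * (τ (p ^ 2) : ℚ) / (τ p : ℚ) ^ 2 →
            v = (τ (p ^ 3) : ℚ) / (τ p : ℚ) ^ 3 →
          ∀ D : ℕ, D = Nat.lcm u.den v.den →
          ∀ E F : ℤ, (E : ℚ) = u * D → (F : ℚ) = v * D →
            IsCoprime E F ∧ IsCoprime (D : ℤ) E ∧ IsCoprime (D : ℤ) F ∧
            E - F = (D : ℤ) ∧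
            (D : ℝ) ≤ C * (p : ℝ) ^ 11 ∧
            (max E.natAbs F.natAbs : ℝ) ≤ C * (p : ℝ) ^ 22 ∧
            c * (p : ℝ) ≤ (max E.natAbs F.natAbs : ℝ) := by
  refine ⟨10, 1/5, by norm_num, by norm_num, ?_⟩
  intro τ h2 h3 hDel p hp ht u v hu hv D hD E F hE hF
  set t : ℤ := τ p with htdef
  have hp2 : 2 ≤ p := hp.two_le
  have hpZ : (2:ℤ) ≤ (p:ℤ) := by exact_mod_cast hp2
  have hp11 : (0:ℤ) < (p:ℤ)^11 := by positivity
  have ht2 : (0:ℤ) < t^2 := by positivity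
  have htQ : (t:ℚ) ≠ 0 := Int.cast_ne_zero.mpr ht
  set w : ℚ := ((2 * (p:ℤ)^11 : ℤ) : ℚ) / ((t^2 : ℤ) : ℚ) with hwdef
  have hu' : u = 2 - w := by
    rw [hu, h2 p hp, hwdef]
    push_cast
    field_simp
    ring
  have hv' : v = 1 - w := by
    rw [hv, h3 p hp, hwdef]
    push_cast
    field_simp
    ring
  have hdu : u.den = w.den := by
    have h : u = -w + ((2:ℤ):ℚ) := by rw [hu']; push_cast; ring
    rw [h, den_add_intCast, Rat.neg_den]
  have hdv : v.den = w.den := by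
    have h : v = -w + ((1:ℤ):ℚ) := by rw [hv']; push_cast; ring
    rw [h, den_add_intCast, Rat.neg_den]
  have hDw : D = w.den := by rw [hD, hdu, hdv, Nat.lcm_self]
  have hD0 : 0 < D := hDw ▸ w.den_pos
  have hDZ : (0:ℤ) < (D:ℤ) := by exact_mod_cast hD0
  set n : ℤ := w.num with hndef
  have hnD : (n:ℚ) = w * D := by rw [hDw]; exact (Rat.mul_den_eq_num w).symm
  -- integer expressions for E and F
  have hEint : E = 2 * D - n := by
    have h : (E:ℚ) = 2 * (D:ℚ) - w * (D:ℚ) := by rw [hE, hu']; ring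
    rw [← hnD] at h
    exact_mod_cast h
  have hFint : F = D - n := by
    have h : (F:ℚ) = (D:ℚ) - w * (D:ℚ) := by rw [hF, hv']; ring
    rw [← hnD] at h
    exact_mod_cast h
  -- key integer identity
  have hkey : n * t^2 = 2 * (p:ℤ)^11 * D := by
    have h : (n:ℚ) * ((t:ℚ))^2 = 2 * (p:ℚ)^11 * (D:ℚ) := by
      rw [hnD, hwdef]
      push_cast
      field_simp
    exact_mod_cast h
  -- coprimality of n and D
  have hcopDn : IsCoprime ((D:ℤ)) n := by
    rw [Int.isCoprime_iff_gcd_eq_one, hDw, hndef]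
    simpa [Int.gcd] using (Nat.coprime_comm.mp w.reduced)
  have hcopDE : IsCoprime ((D:ℤ)) E := by
    have h := (hcopDn.neg_right).add_mul_left_right 2
    have he : E = -n + (D:ℤ) * 2 := by rw [hEint]; ring
    rwa [← he] at h
  have hcopDF : IsCoprime ((D:ℤ)) F := by
    have h := (hcopDn.neg_right).add_mul_left_right 1
    have hf : F = -n + (D:ℤ) * 1 := by rw [hFint]; ring
    rwa [← hf] at h
  have hEF : E - F = (D:ℤ) := by rw [hEint, hFint]; ring
  have hcopEF : IsCoprime E F := by
    have h := (hcopDE.symm.neg_right).add_mul_left_right 1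
    have hf : F = -(D:ℤ) + E * 1 := by rw [hEint, hFint]; ring
    rwa [← hf] at h
  -- D divides t²
  have hDdvd : ((D:ℤ)) ∣ t^2 := by
    have h1 : w = Rat.divInt (2*(p:ℤ)^11) (t^2) := by rw [hwdef, Rat.divInt_eq_div]
    have h2' : ((w.den : ℤ)) ∣ t^2 := by rw [h1]; exact Rat.den_dvd _ _
    rwa [hDw]
  have hDle : (D:ℤ) ≤ t^2 := Int.le_of_dvd ht2 hDdvd
  have hDel' : t^2 ≤ 4 * (p:ℤ)^11 := hDel p hp
  have hDle4 : (D:ℤ) ≤ 4 * (p:ℤ)^11 := le_trans hDle hDel'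
  -- n is positive and at most 2p¹¹
  have hnpos : 0 < n := by
    have h : 0 < n * t^2 := by rw [hkey]; positivity
    by_contra hc
    push_neg at hc
    nlinarith
  have hnle : n ≤ 2 * (p:ℤ)^11 := by
    have h : n * t^2 ≤ (2 * (p:ℤ)^11) * t^2 := by
      rw [hkey]
      nlinarith
    exact le_of_mul_le_mul_right h ht2
  -- natAbs bounds
  have hEabs : (E.natAbs : ℤ) ≤ 10 * (p:ℤ)^11 := by
    rw [Int.natCast_natAbs, abs_le]
    exact ⟨by linarith, by linarith⟩
  have hFabs : (F.natAbs : ℤ) ≤ 10 * (p:ℤ)^11 := by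
    rw [Int.natCast_natAbs, abs_le]
    exact ⟨by linarith, by linarith⟩
  refine ⟨hcopEF, hcopDE, hcopDF, hEF, ?_, ?_, ?_⟩
  · -- D ≤ 10 p^11
    have h : (D:ℝ) ≤ 4 * (p:ℝ)^11 := by exact_mod_cast hDle4
    have h2 : (0:ℝ) ≤ (p:ℝ)^11 := by positivity
    linarith
  · -- max ≤ 10 p^22
    have hp1R : (1:ℝ) ≤ (p:ℝ) := by exact_mod_cast hp.one_lt.le
    have hpow : (p:ℝ)^11 ≤ (p:ℝ)^22 := pow_le_pow_right₀ hp1R (by norm_num)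
    have hE' : ((E.natAbs : ℕ) : ℝ) ≤ 10 * (p:ℝ)^11 := by exact_mod_cast hEabs
    have hF' : ((F.natAbs : ℕ) : ℝ) ≤ 10 * (p:ℝ)^11 := by exact_mod_cast hFabs
    exact max_le (by linarith) (by linarith)
  · -- lower bound
    set M : ℕ := max E.natAbs F.natAbs with hM
    have hMa : E.natAbs ≤ M := le_max_left _ _
    have hMb : F.natAbs ≤ M := le_max_right _ _
    have hM1 : 1 ≤ M := by
      by_contra hc
      push_neg at hc
      interval_cases M
      · have hE0 : E = 0 := by omega
        have hF0 : F = 0 := by omega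
        rw [hE0, hF0] at hEF
        omega
    have hmain : (p:ℤ) ≤ 5 * (M:ℤ) := by
      by_cases hp5 : p ≤ 5
      · have : (p:ℤ) ≤ 5 := by exact_mod_cast hp5
        have : (1:ℤ) ≤ (M:ℤ) := by exact_mod_cast hM1
        linarith
      · -- p ≥ 7 : show p ∣ n
        have hpdvd : (p:ℤ) ∣ n := by
          by_contra hnd
          set m : ℕ := t.natAbs with hm
          have hm0 : m ≠ 0 := Int.natAbs_ne_zero.mpr ht
          have hmt : ((m:ℤ))^2 = t^2 := by
            rw [hm]
            exact_mod_cast Int.natAbs_sq t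
          have hnn : n.natAbs * m^2 = 2 * p^11 * D := by
            have h1 : (n.natAbs : ℤ) = n := Int.natAbs_of_nonneg hnpos.le
            have : (n.natAbs : ℤ) * ((m:ℤ))^2 = 2 * (p:ℤ)^11 * D := by
              rw [h1, hmt]; exact hkey
            exact_mod_cast this
          have hpn : ¬ p ∣ n.natAbs := by
            intro h
            exact hnd (by rwa [← Int.natAbs_of_nonneg hnpos.le, Int.natCast_dvd_natCast])
          have hcp : Nat.Coprime (p^11) n.natAbs :=
            Nat.Coprime.pow_left _ ((hp.coprime_iff_not_dvd).mpr hpn)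
          have hdvd2 : p^11 ∣ n.natAbs * m^2 := by
            rw [hnn]; exact ⟨2*D, by ring⟩
          have hdvdm : p^11 ∣ m^2 := hcp.dvd_of_dvd_mul_left hdvd2
          have h4 : m^2 ≤ 4 * p^11 := by
            have : ((m:ℤ))^2 ≤ 4*(p:ℤ)^11 := by rw [hmt]; exact hDel'
            exact_mod_cast this
          have hmlt : m^2 < p^12 := by
            have hpp : 0 < p^11 := Nat.pow_pos (by omega)
            have h12 : p^12 = p * p^11 := by ring
            have : 4 * p^11 < p * p^11 := by
              apply Nat.mul_lt_mul_of_lt_of_le (by omega) (le_refl _)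
              exact hpp
            omega
          have hle11 : 11 ≤ (m^2).factorization p :=
            (hp.pow_dvd_iff_le_factorization (pow_ne_zero 2 hm0)).mp hdvdm
          have hlt12 : (m^2).factorization p < 12 := by
            by_contra hcc
            push_neg at hcc
            have hd12 : p^12 ∣ m^2 :=
              (hp.pow_dvd_iff_le_factorization (pow_ne_zero 2 hm0)).mpr hcc
            have := Nat.le_of_dvd (Nat.pos_of_ne_zero (pow_ne_zero 2 hm0)) hd12
            omega
          have heven : (m^2).factorization p = 2 * m.factorization p := by
            rw [Nat.factorization_pow]
            simp
          omega
        have hpn' : (p:ℤ) ≤ n := Int.le_of_dvd hnpos hpdvd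
        have hnEF : n = E - 2*F := by rw [hEint, hFint]; ring
        have hEa : E ≤ (E.natAbs : ℤ) := Int.le_natAbs
        have hFa : -F ≤ (F.natAbs : ℤ) := by
          rw [Int.natCast_natAbs]
          exact neg_le_abs F
        have hMaZ : (E.natAbs : ℤ) ≤ (M:ℤ) := by exact_mod_cast hMa
        have hMbZ : (F.natAbs : ℤ) ≤ (M:ℤ) := by exact_mod_cast hMb
        linarith
    have h : (p:ℝ) ≤ 5 * (M:ℝ) := by exact_mod_cast hmain
    have hMR : ((M:ℕ) : ℝ) = max ((E.natAbs : ℕ) : ℝ) ((F.natAbs : ℕ) : ℝ) := by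
      rw [hM]
      push_cast
      rfl
    linarith [h, hMR]
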